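/- Let M and K be disjoint finite sets with #M = m ≥ 1, let P be a partial order on K, and let Q ∈ E(M,P). Then d(Q) = Σ_{D} 2^{#(M ∖ QD)}, where the sum ranges over all downsets D of P and QD denotes the down-closure of D in Q; moreover d(Q) ≤ 2^{m−1} · (d(P) + 1), and equality holds exactly when Q is isomorphic to A_{m−1} + (A_1 ⊕ P), the disjoint sum of an (m−1)-element antichain with the poset obtained by adjoining one element below all of P. -/

import Mathlib

open scoped Classical

variable {α : Type*} [DecidableEq α]

/-- `q` is a partial order relation with ground set `S`: it is a set of pairs
contained in `S × S`, reflexive on `S`, transitive and antisymmetric. -/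
def IsPOon (S : Finset α) (q : Finset (α × α)) : Prop :=
  q ⊆ S ×ˢ S ∧ (∀ x ∈ S, (x, x) ∈ q) ∧
  (∀ x y z : α, (x, y) ∈ q → (y, z) ∈ q → (x, z) ∈ q) ∧
  (∀ x y : α, (x, y) ∈ q → (y, x) ∈ q → x = y)

/-- The relation induced on a subset `A` of the ground set. -/
def restrictRel (q : Finset (α × α)) (A : Finset α) : Finset (α × α) :=
  q.filter fun r => r.1 ∈ A ∧ r.2 ∈ A

/-- The downsets of the poset `(S, q)`. -/
noncomputable def downsets (S : Finset α) (q : Finset (α × α)) : Finset (Finset α) :=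
  S.powerset.filter fun D => ∀ y ∈ D, ∀ x : α, (x, y) ∈ q → x ∈ D

/-- `d(P)`, the number of downsets of the poset `(S, q)`. -/
noncomputable def dnum (S : Finset α) (q : Finset (α × α)) : ℕ :=
  (downsets S q).card

/-- The upsets of the poset `(S, q)`. -/
noncomputable def upsets (S : Finset α) (q : Finset (α × α)) : Finset (Finset α) :=
  S.powerset.filter fun U => ∀ x ∈ U, ∀ y : α, (x, y) ∈ q → y ∈ U

/-- Down-closure `QA = {x : x ≤_Q a for some a ∈ A}`. -/
def dcl (q : Finset (α × α)) (A : Finset α) : Finset α :=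
  (q.filter fun r => r.2 ∈ A).image Prod.fst

/-- Up-closure `AQ = {y : a ≤_Q y for some a ∈ A}`. -/
def ucl (q : Finset (α × α)) (A : Finset α) : Finset α :=
  (q.filter fun r => r.1 ∈ A).image Prod.snd

/-- The set of minimal elements of the poset `(S, q)`. -/
noncomputable def minset (S : Finset α) (q : Finset (α × α)) : Finset α :=
  S.filter fun x => ∀ y : α, (y, x) ∈ q → y = x

/-- `E(M, P)`: the partial orders on `M ∪ K` inducing `p` on `K` whose set of
minimal elements is exactly `M`. -/
noncomputable def extPOs (M K : Finset α) (p : Finset (α × α)) :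
    Finset (Finset (α × α)) :=
  ((M ∪ K) ×ˢ (M ∪ K)).powerset.filter fun q =>
    IsPOon (M ∪ K) q ∧ restrictRel q K = p ∧ minset (M ∪ K) q = M

/-- `A` is an antichain of the poset `(S, q)`. -/
def isAntichain (S : Finset α) (q : Finset (α × α)) (A : Finset α) : Prop :=
  A ⊆ S ∧ ∀ x ∈ A, ∀ y ∈ A, (x, y) ∈ q → x = y

/-- The posets `(S, q)` and `(T, r)` are order-isomorphic. -/
def POIso {β : Type*} (S : Finset α) (q : Finset (α × α))
    (T : Finset β) (r : Finset (β × β)) : Prop :=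
  ∃ f : α → β, Set.BijOn f ↑S ↑T ∧ ∀ x ∈ S, ∀ y ∈ S, ((x, y) ∈ q ↔ (f x, f y) ∈ r)

/-- `C` is a chain of the poset `(S, q)`. -/
def isChainOn (S : Finset α) (q : Finset (α × α)) (C : Finset α) : Prop :=
  C ⊆ S ∧ ∀ x ∈ C, ∀ y ∈ C, (x, y) ∈ q ∨ (y, x) ∈ q

/-- The height of the poset `(S, q)`: the maximal size of a chain. -/
noncomputable def heightP (S : Finset α) (q : Finset (α × α)) : ℕ :=
  (S.powerset.filter (isChainOn S q)).sup Finset.card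

/- ### helper lemmas -/

lemma mem_dcl {q : Finset (α × α)} {A : Finset α} {x : α} :
    x ∈ dcl q A ↔ ∃ d ∈ A, (x, d) ∈ q := by
  simp only [dcl, Finset.mem_image, Finset.mem_filter, Prod.exists]
  constructor
  · rintro ⟨a, b, ⟨hq, hb⟩, rfl⟩; exact ⟨b, hb, hq⟩
  · rintro ⟨d, hd, hq⟩; exact ⟨x, d, ⟨hq, hd⟩, rfl⟩

lemma mem_downsets {S : Finset α} {q : Finset (α × α)} {D : Finset α} :
    D ∈ downsets S q ↔ D ⊆ S ∧ ∀ y ∈ D, ∀ x : α, (x, y) ∈ q → x ∈ D := by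
  simp [downsets, Finset.mem_filter, Finset.mem_powerset]

lemma dcl_empty (q : Finset (α × α)) : dcl q ∅ = ∅ := by
  ext x; simp [mem_dcl]

lemma empty_mem_downsets (K : Finset α) (p : Finset (α × α)) : ∅ ∈ downsets K p := by
  simp [mem_downsets]

structure ExtHyp (M K : Finset α) (p q : Finset (α × α)) : Prop where
  disj : Disjoint M K
  sub : q ⊆ (M ∪ K) ×ˢ (M ∪ K)
  refl : ∀ x ∈ M ∪ K, (x, x) ∈ q
  trans : ∀ x y z : α, (x, y) ∈ q → (y, z) ∈ q → (x, z) ∈ q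
  antisymm : ∀ x y : α, (x, y) ∈ q → (y, x) ∈ q → x = y
  res : restrictRel q K = p
  min : minset (M ∪ K) q = M

variable {M K : Finset α} {p q : Finset (α × α)}

lemma ExtHyp.pmem (h : ExtHyp M K p q) {x y : α} :
    (x, y) ∈ p ↔ (x, y) ∈ q ∧ x ∈ K ∧ y ∈ K := by
  rw [← h.res, restrictRel, Finset.mem_filter]

lemma ExtHyp.psub (h : ExtHyp M K p q) : p ⊆ q := fun r hr => by
  rw [← h.res, restrictRel, Finset.mem_filter] at hr; exact hr.1

lemma ExtHyp.min_le (h : ExtHyp M K p q) {a x : α} (ha : a ∈ M) (hxa : (x, a) ∈ q) :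
    x = a := by
  have h2 : a ∈ minset (M ∪ K) q := by rw [h.min]; exact ha
  rw [minset, Finset.mem_filter] at h2
  exact h2.2 x hxa

lemma ExtHyp.below (h : ExtHyp M K p q) {x : α} (hx : x ∈ M ∪ K) :
    ∃ a ∈ M, (a, x) ∈ q := by
  classical
  set B := (M ∪ K).filter (fun y => (y, x) ∈ q) with hB
  have hxB : x ∈ B := by simp [hB, hx, h.refl x hx]
  obtain ⟨b, hbB, hbmin⟩ := B.exists_min_image
    (fun b => ((M ∪ K).filter (fun y => (y, b) ∈ q)).card) ⟨x, hxB⟩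
  simp only [hB, Finset.mem_filter] at hbB
  have hbm : b ∈ minset (M ∪ K) q := by
    rw [minset, Finset.mem_filter]
    refine ⟨hbB.1, fun y hy => ?_⟩
    by_contra hne
    have hyS : y ∈ M ∪ K := (Finset.mem_product.mp (h.sub hy)).1
    have hyB : y ∈ B := by
      simp only [hB, Finset.mem_filter]
      exact ⟨hyS, h.trans _ _ _ hy hbB.2⟩
    have hsub : (M ∪ K).filter (fun z => (z, y) ∈ q) ⊆ (M ∪ K).filter (fun z => (z, b) ∈ q) := by
      intro z hz
      simp only [Finset.mem_filter] at hz ⊢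
      exact ⟨hz.1, h.trans _ _ _ hz.2 hy⟩
    have hss : (M ∪ K).filter (fun z => (z, y) ∈ q) ⊂ (M ∪ K).filter (fun z => (z, b) ∈ q) := by
      refine (Finset.ssubset_iff_of_subset hsub).mpr ⟨b, ?_, ?_⟩
      · simp only [Finset.mem_filter]; exact ⟨hbB.1, h.refl b hbB.1⟩
      · simp only [Finset.mem_filter, not_and]
        intro _ hby
        exact hne (h.antisymm _ _ hy hby)
    exact absurd (hbmin y hyB) (not_le.mpr (Finset.card_lt_card hss))
  exact ⟨b, h.min ▸ hbm, hbB.2⟩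

lemma ExtHyp.fiber_card (h : ExtHyp M K p q) {D : Finset α} (hD : D ∈ downsets K p) :
    ((downsets (M ∪ K) q).filter (fun D' => D' ∩ K = D)).card
      = 2 ^ (M \ dcl q D).card := by
  classical
  rw [mem_downsets] at hD
  obtain ⟨hDK, hDdown⟩ := hD
  set N := M \ dcl q D with hN
  rw [← Finset.card_powerset N]
  apply Finset.card_nbij' (fun D' => D' ∩ N) (fun T => T ∪ ((M ∩ dcl q D) ∪ D))
  · -- maps into powerset
    intro D' _
    exact Finset.mem_powerset.mpr Finset.inter_subset_right
  · -- j maps into fiber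
    intro T hT
    rw [Finset.mem_coe, Finset.mem_powerset] at hT
    have hTM : T ⊆ M := hT.trans (Finset.sdiff_subset)
    simp only [Finset.mem_coe, Finset.mem_filter, mem_downsets]
    refine ⟨⟨?_, ?_⟩, ?_⟩
    · -- subset of M ∪ K
      intro x hx
      rcases Finset.mem_union.mp hx with hx | hx
      · exact Finset.mem_union_left _ (hTM hx)
      · rcases Finset.mem_union.mp hx with hx | hx
        · exact Finset.mem_union_left _ (Finset.mem_inter.mp hx).1
        · exact Finset.mem_union_right _ (hDK hx)
    · -- downset property
      intro y hy x hxy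
      have hxS : x ∈ M ∪ K := (Finset.mem_product.mp (h.sub hxy)).1
      rcases Finset.mem_union.mp hy with hy | hy
      · -- y ∈ T ⊆ M : minimal
        have := h.min_le (hTM hy) hxy
        subst this
        exact Finset.mem_union_left _ hy
      · rcases Finset.mem_union.mp hy with hy | hy
        · -- y ∈ M ∩ dcl : minimal
          have := h.min_le (Finset.mem_inter.mp hy).1 hxy
          subst this
          exact Finset.mem_union_right _ (Finset.mem_union_left _ hy)
        · -- y ∈ D
          rcases Finset.mem_union.mp hxS with hxM | hxK
          · refine Finset.mem_union_right _ (Finset.mem_union_left _ ?_)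
            exact Finset.mem_inter.mpr ⟨hxM, mem_dcl.mpr ⟨y, hy, hxy⟩⟩
          · refine Finset.mem_union_right _ (Finset.mem_union_right _ ?_)
            exact hDdown y hy x (h.pmem.mpr ⟨hxy, hxK, hDK hy⟩)
    · -- intersection with K is D
      ext x
      simp only [Finset.mem_inter, Finset.mem_union]
      constructor
      · rintro ⟨hx | hx | hx, hxK⟩
        · exact absurd (h.disj.forall_ne_finset (hTM hx) hxK) (fun hne => hne rfl)
        · exact absurd (h.disj.forall_ne_finset hx.1 hxK) (fun hne => hne rfl)
        · exact hx
      · intro hx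
        exact ⟨Or.inr (Or.inr hx), hDK hx⟩
  · -- left inverse
    intro D' hD'
    simp only [Finset.mem_coe, Finset.mem_filter, mem_downsets] at hD'
    obtain ⟨⟨hsub, hdown⟩, hfib⟩ := hD'
    have hDD' : D ⊆ D' := by
      intro d hd
      rw [← hfib] at hd
      exact (Finset.mem_inter.mp hd).1
    have hMd : M ∩ dcl q D ⊆ D' := by
      intro a ha
      rcases mem_dcl.mp (Finset.mem_inter.mp ha).2 with ⟨d, hdD, had⟩
      exact hdown d (hDD' hdD) a had
    ext x
    simp only [Finset.mem_union, Finset.mem_inter]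
    constructor
    · rintro (⟨hx, _⟩ | hx | hx)
      · exact hx
      · exact hMd (Finset.mem_inter.mpr hx)
      · exact hDD' hx
    · intro hx
      have hxS : x ∈ M ∪ K := hsub hx
      rcases Finset.mem_union.mp hxS with hxM | hxK
      · by_cases hxd : x ∈ dcl q D
        · exact Or.inr (Or.inl ⟨hxM, hxd⟩)
        · exact Or.inl ⟨hx, by rw [hN]; exact Finset.mem_sdiff.mpr ⟨hxM, hxd⟩⟩
      · exact Or.inr (Or.inr (by rw [← hfib]; exact Finset.mem_inter.mpr ⟨hx, hxK⟩))
  · -- right inverse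
    intro T hT
    rw [Finset.mem_coe, Finset.mem_powerset] at hT
    ext x
    simp only [Finset.mem_inter, Finset.mem_union]
    constructor
    · rintro ⟨hx | hx | hx, hxN⟩
      · exact hx
      · exact absurd (Finset.mem_sdiff.mp (hN ▸ hxN)).2 (fun h2 => h2 hx.2)
      · have hxM : x ∈ M := (Finset.mem_sdiff.mp (hN ▸ hxN)).1
        exact absurd (h.disj.forall_ne_finset hxM (hDK hx)) (fun hne => hne rfl)
    · intro hx
      exact ⟨Or.inl hx, hT hx⟩

lemma ExtHyp.count (h : ExtHyp M K p q) :
    dnum (M ∪ K) q = ∑ D ∈ downsets K p, 2 ^ (M \ dcl q D).card := by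
  classical
  rw [dnum, Finset.card_eq_sum_card_fiberwise (f := fun D' => D' ∩ K) (t := downsets K p)]
  · exact Finset.sum_congr rfl (fun D hD => h.fiber_card hD)
  · intro D' hD'
    rw [Finset.mem_coe, mem_downsets] at hD' ⊢
    obtain ⟨hsub, hdown⟩ := hD'
    refine ⟨Finset.inter_subset_right, ?_⟩
    intro y hy x hxp
    have hx := h.pmem.mp hxp
    exact Finset.mem_inter.mpr ⟨hdown y (Finset.mem_inter.mp hy).1 x hx.1, hx.2.1⟩

lemma ExtHyp.nonempty_term (h : ExtHyp M K p q) {D : Finset α} (hD : D ∈ downsets K p)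
    (hne : D.Nonempty) : (M \ dcl q D).card < M.card := by
  obtain ⟨k, hk⟩ := hne
  have hkK : k ∈ K := (mem_downsets.mp hD).1 hk
  obtain ⟨a, haM, hak⟩ := h.below (Finset.mem_union_right _ hkK)
  apply Finset.card_lt_card
  refine (Finset.ssubset_iff_of_subset Finset.sdiff_subset).mpr ⟨a, haM, ?_⟩
  simp only [Finset.mem_sdiff, not_and, not_not]
  exact fun _ => mem_dcl.mpr ⟨k, hk, hak⟩

lemma ExtHyp.sum_split (h : ExtHyp M K p q) :
    dnum (M ∪ K) q = 2 ^ M.card +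
      ∑ D ∈ (downsets K p).erase ∅, 2 ^ (M \ dcl q D).card := by
  rw [h.count, ← Finset.add_sum_erase _ _ (empty_mem_downsets K p), dcl_empty,
    Finset.sdiff_empty]

lemma dnum_pos (K : Finset α) (p : Finset (α × α)) : 1 ≤ dnum K p :=
  Finset.card_pos.mpr ⟨∅, empty_mem_downsets K p⟩

lemma ExtHyp.eq_iff' (h : ExtHyp M K p q) (hm : 1 ≤ M.card) :
    dnum (M ∪ K) q = 2 ^ (M.card - 1) * (dnum K p + 1) ↔
      ∀ D ∈ (downsets K p).erase ∅, (M \ dcl q D).card = M.card - 1 := by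
  classical
  obtain ⟨e, he⟩ := Nat.exists_eq_add_of_le (dnum_pos K p)
  have hA : 2 ^ M.card = 2 ^ (M.card - 1) * 2 := by
    rw [← pow_succ]; congr 1; omega
  have hle : ∀ D ∈ (downsets K p).erase ∅, 2 ^ (M \ dcl q D).card ≤ 2 ^ (M.card - 1) := by
    intro D hD
    rcases Finset.mem_erase.mp hD with ⟨hne, hDd⟩
    have := h.nonempty_term hDd (Finset.nonempty_iff_ne_empty.mpr hne)
    exact Nat.pow_le_pow_right (by norm_num) (by omega)
  have hcard : ((downsets K p).erase ∅).card = e := by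
    rw [Finset.card_erase_of_mem (empty_mem_downsets K p)]
    have hd : (downsets K p).card = dnum K p := rfl
    omega
  have hconst : ∑ _D ∈ (downsets K p).erase ∅, 2 ^ (M.card - 1) = e * 2 ^ (M.card - 1) := by
    rw [Finset.sum_const, hcard, smul_eq_mul]
  have harith : 2 ^ (M.card - 1) * (dnum K p + 1)
      = 2 ^ M.card + e * 2 ^ (M.card - 1) := by
    rw [hA, he]; ring
  rw [h.sum_split, harith]
  constructor
  · intro heq D hD
    have hsum : ∑ D ∈ (downsets K p).erase ∅, 2 ^ (M \ dcl q D).card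
        = ∑ _D ∈ (downsets K p).erase ∅, 2 ^ (M.card - 1) := by
      rw [hconst]; exact Nat.add_left_cancel heq
    have := (Finset.sum_eq_sum_iff_of_le hle).mp hsum D hD
    exact Nat.pow_right_injective (by norm_num) this
  · intro hu
    have : ∑ D ∈ (downsets K p).erase ∅, 2 ^ (M \ dcl q D).card
        = e * 2 ^ (M.card - 1) := by
      rw [← hconst]
      exact Finset.sum_congr rfl fun D hD => by rw [hu D hD]
    rw [this]

lemma mem_target {M K : Finset α} {p : Finset (α × α)} {a x y : α} :
    (x, y) ∈ ((M ∪ K).image fun z => (z, z)) ∪ p ∪ ({a} : Finset α) ×ˢ K ↔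
      (x = y ∧ x ∈ M ∪ K) ∨ (x, y) ∈ p ∨ (x = a ∧ y ∈ K) := by
  simp only [Finset.mem_union, Finset.mem_image, Finset.mem_product, Finset.mem_singleton,
    Prod.mk.injEq]
  constructor
  · rintro ((⟨z, hz, hzx, hzy⟩ | hp) | hak)
    · subst hzx; subst hzy; exact Or.inl ⟨rfl, hz⟩
    · exact Or.inr (Or.inl hp)
    · exact Or.inr (Or.inr hak)
  · rintro (⟨rfl, hx⟩ | hp | hak)
    · exact Or.inl (Or.inl ⟨x, hx, rfl, rfl⟩)
    · exact Or.inl (Or.inr hp)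
    · exact Or.inr hak

lemma ExtHyp.pK (h : ExtHyp M K p q) : p ⊆ K ×ˢ K := by
  intro r hr
  obtain ⟨x, y⟩ := r
  have := h.pmem.mp hr
  exact Finset.mem_product.mpr ⟨this.2.1, this.2.2⟩

lemma ExtHyp.term_le (h : ExtHyp M K p q) {D : Finset α}
    (hD : D ∈ (downsets K p).erase ∅) :
    2 ^ (M \ dcl q D).card ≤ 2 ^ (M.card - 1) := by
  rcases Finset.mem_erase.mp hD with ⟨hne, hDd⟩
  have := h.nonempty_term hDd (Finset.nonempty_iff_ne_empty.mpr hne)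
  exact Nat.pow_le_pow_right (by norm_num) (by omega)

lemma ExtHyp.bound (h : ExtHyp M K p q) (hm : 1 ≤ M.card) :
    dnum (M ∪ K) q ≤ 2 ^ (M.card - 1) * (dnum K p + 1) := by
  classical
  obtain ⟨e, he⟩ := Nat.exists_eq_add_of_le (dnum_pos K p)
  have hA : 2 ^ M.card = 2 ^ (M.card - 1) * 2 := by rw [← pow_succ]; congr 1; omega
  have hcard : ((downsets K p).erase ∅).card = e := by
    rw [Finset.card_erase_of_mem (empty_mem_downsets K p)]
    have hd : (downsets K p).card = dnum K p := rfl
    omega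
  have hs : ∑ D ∈ (downsets K p).erase ∅, 2 ^ (M \ dcl q D).card
      ≤ e * 2 ^ (M.card - 1) := by
    calc ∑ D ∈ (downsets K p).erase ∅, 2 ^ (M \ dcl q D).card
        ≤ ∑ _D ∈ (downsets K p).erase ∅, 2 ^ (M.card - 1) :=
          Finset.sum_le_sum (fun D hD => h.term_le hD)
      _ = e * 2 ^ (M.card - 1) := by rw [Finset.sum_const, hcard, smul_eq_mul]
  rw [h.sum_split, hA, he]
  have : 2 ^ (M.card - 1) * (1 + e + 1)
      = 2 ^ (M.card - 1) * 2 + e * 2 ^ (M.card - 1) := by ring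
  omega

lemma ExtHyp.structure_of_uniform (h : ExtHyp M K p q) (hm : 1 ≤ M.card)
    (hu : ∀ D ∈ (downsets K p).erase ∅, (M \ dcl q D).card = M.card - 1) :
    ∃ a ∈ M, q = ((M ∪ K).image fun z => (z, z)) ∪ p ∪ (({a} : Finset α) ×ˢ K) := by
  classical
  have hDk : ∀ k ∈ K, K.filter (fun x => (x, k) ∈ p) ∈ downsets K p := by
    intro k hk
    rw [mem_downsets]
    refine ⟨Finset.filter_subset _ _, ?_⟩
    intro y hy x hxy
    rw [Finset.mem_filter] at hy ⊢
    have h1 := h.pmem.mp hxy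
    have h2 := h.pmem.mp hy.2
    exact ⟨h1.2.1, h.pmem.mpr ⟨h.trans _ _ _ h1.1 h2.1, h1.2.1, h2.2.2⟩⟩
  have hkmem : ∀ k ∈ K, k ∈ K.filter (fun x => (x, k) ∈ p) := by
    intro k hk
    rw [Finset.mem_filter]
    exact ⟨hk, h.pmem.mpr ⟨h.refl k (Finset.mem_union_right _ hk), hk, hk⟩⟩
  have hsingle : ∀ D ∈ downsets K p, D.Nonempty → ∃ a ∈ M, M ∩ dcl q D = {a} := by
    intro D hD hne
    have hcard1 : (M ∩ dcl q D).card = 1 := by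
      have h1 := hu D (Finset.mem_erase.mpr ⟨Finset.nonempty_iff_ne_empty.mp hne, hD⟩)
      have h2 := Finset.card_sdiff_add_card_inter M (dcl q D)
      omega
    obtain ⟨a, ha⟩ := Finset.card_eq_one.mp hcard1
    refine ⟨a, ?_, ha⟩
    have : a ∈ M ∩ dcl q D := ha ▸ Finset.mem_singleton_self a
    exact (Finset.mem_inter.mp this).1
  have hfilter : ∀ k ∈ K, M ∩ dcl q (K.filter (fun x => (x, k) ∈ p))
      = M.filter (fun x => (x, k) ∈ q) := by
    intro k hk
    ext x
    simp only [Finset.mem_inter, Finset.mem_filter, mem_dcl]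
    constructor
    · rintro ⟨hxM, d, hd, hxd⟩
      exact ⟨hxM, h.trans _ _ _ hxd (h.psub hd.2)⟩
    · rintro ⟨hxM, hxk⟩
      exact ⟨hxM, k, Finset.mem_filter.mp (hkmem k hk), hxk⟩
  have hmain : ∃ a ∈ M, ∀ k ∈ K, M.filter (fun x => (x, k) ∈ q) = {a} := by
    by_cases hK : K = ∅
    · obtain ⟨a, ha⟩ := Finset.card_pos.mp hm
      exact ⟨a, ha, by simp [hK]⟩
    · obtain ⟨k0, hk0⟩ := Finset.nonempty_iff_ne_empty.mpr hK
      obtain ⟨a, haM, ha⟩ := hsingle _ (hDk k0 hk0) ⟨k0, hkmem k0 hk0⟩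
      rw [hfilter k0 hk0] at ha
      have haq : (a, k0) ∈ q := by
        have : a ∈ M.filter (fun x => (x, k0) ∈ q) := by
          rw [ha]; exact Finset.mem_singleton_self a
        exact (Finset.mem_filter.mp this).2
      refine ⟨a, haM, fun k hk => ?_⟩
      obtain ⟨a', ha'M, ha'⟩ := hsingle _ (hDk k hk) ⟨k, hkmem k hk⟩
      rw [hfilter k hk] at ha'
      have ha'q : (a', k) ∈ q := by
        have : a' ∈ M.filter (fun x => (x, k) ∈ q) := by
          rw [ha']; exact Finset.mem_singleton_self a'
        exact (Finset.mem_filter.mp this).2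
      rw [ha']
      have : a' = a := by
        by_contra hne
        have hU : K.filter (fun x => (x, k0) ∈ p) ∪ K.filter (fun x => (x, k) ∈ p)
            ∈ downsets K p := by
          rw [mem_downsets]
          constructor
          · exact Finset.union_subset (Finset.filter_subset _ _) (Finset.filter_subset _ _)
          · intro y hy x hxy
            rcases Finset.mem_union.mp hy with hy | hy
            · exact Finset.mem_union_left _ ((mem_downsets.mp (hDk k0 hk0)).2 y hy x hxy)
            · exact Finset.mem_union_right _ ((mem_downsets.mp (hDk k hk)).2 y hy x hxy)
        obtain ⟨b, hbM, hb⟩ := hsingle _ hU ⟨k0, Finset.mem_union_left _ (hkmem k0 hk0)⟩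
        have haU : a ∈ M ∩ dcl q (K.filter (fun x => (x, k0) ∈ p) ∪ K.filter (fun x => (x, k) ∈ p)) :=
          Finset.mem_inter.mpr
            ⟨haM, mem_dcl.mpr ⟨k0, Finset.mem_union_left _ (hkmem k0 hk0), haq⟩⟩
        have ha'U : a' ∈ M ∩ dcl q (K.filter (fun x => (x, k0) ∈ p) ∪ K.filter (fun x => (x, k) ∈ p)) :=
          Finset.mem_inter.mpr
            ⟨ha'M, mem_dcl.mpr ⟨k, Finset.mem_union_right _ (hkmem k hk), ha'q⟩⟩
        rw [hb] at haU ha'U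
        exact hne ((Finset.mem_singleton.mp ha'U).trans (Finset.mem_singleton.mp haU).symm)
      rw [this]
  obtain ⟨a, haM, hafilter⟩ := hmain
  refine ⟨a, haM, ?_⟩
  ext ⟨x, y⟩
  rw [mem_target]
  constructor
  · intro hxy
    have hxS : x ∈ M ∪ K := (Finset.mem_product.mp (h.sub hxy)).1
    have hyS : y ∈ M ∪ K := (Finset.mem_product.mp (h.sub hxy)).2
    by_cases hxyeq : x = y
    · exact Or.inl ⟨hxyeq, hxS⟩
    · rcases Finset.mem_union.mp hyS with hyM | hyK
      · exact absurd (h.min_le hyM hxy) hxyeq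
      · rcases Finset.mem_union.mp hxS with hxM | hxK
        · have hx : x ∈ M.filter (fun z => (z, y) ∈ q) := Finset.mem_filter.mpr ⟨hxM, hxy⟩
          rw [hafilter y hyK] at hx
          exact Or.inr (Or.inr ⟨Finset.mem_singleton.mp hx, hyK⟩)
        · exact Or.inr (Or.inl (h.pmem.mpr ⟨hxy, hxK, hyK⟩))
  · rintro (⟨rfl, hx⟩ | hp | ⟨hxa, hyK⟩)
    · exact h.refl x hx
    · exact h.psub hp
    · have : a ∈ M.filter (fun z => (z, y) ∈ q) := by
        rw [hafilter y hyK]; exact Finset.mem_singleton_self a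
      rw [hxa]
      exact (Finset.mem_filter.mp this).2

lemma ExtHyp.target (h : ExtHyp M K p q) {a : α} (ha : a ∈ M) :
    ExtHyp M K p (((M ∪ K).image fun z => (z, z)) ∪ p ∪ (({a} : Finset α) ×ˢ K)) := by
  have haK : a ∉ K := Finset.disjoint_left.mp h.disj ha
  have hMnK : ∀ x ∈ M, x ∉ K := fun x hx => Finset.disjoint_left.mp h.disj hx
  refine ⟨h.disj, ?_, ?_, ?_, ?_, ?_, ?_⟩
  · -- sub
    intro r hr
    obtain ⟨x, y⟩ := r
    rcases mem_target.mp hr with ⟨rfl, hx⟩ | hp | ⟨rfl, hyK⟩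
    · exact Finset.mem_product.mpr ⟨hx, hx⟩
    · have := h.pmem.mp hp
      exact Finset.mem_product.mpr ⟨Finset.mem_union_right _ this.2.1,
        Finset.mem_union_right _ this.2.2⟩
    · exact Finset.mem_product.mpr ⟨Finset.mem_union_left _ ha,
        Finset.mem_union_right _ hyK⟩
  · -- refl
    intro x hx
    exact mem_target.mpr (Or.inl ⟨rfl, hx⟩)
  · -- trans
    intro x y z h1 h2
    rcases mem_target.mp h1 with ⟨rfl, hx⟩ | hp1 | ⟨hxa, hyK⟩
    · exact h2
    · rcases mem_target.mp h2 with ⟨rfl, hy⟩ | hp2 | ⟨hya, hzK⟩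
      · exact mem_target.mpr (Or.inr (Or.inl hp1))
      · exact mem_target.mpr (Or.inr (Or.inl (h.pmem.mpr
          ⟨h.trans _ _ _ ((h.pmem.mp hp1).1) ((h.pmem.mp hp2).1),
            (h.pmem.mp hp1).2.1, (h.pmem.mp hp2).2.2⟩)))
      · exact absurd ((h.pmem.mp hp1).2.2) (hya ▸ haK)
    · rcases mem_target.mp h2 with ⟨rfl, hy⟩ | hp2 | ⟨hya, hzK⟩
      · exact mem_target.mpr (Or.inr (Or.inr ⟨hxa, hyK⟩))
      · exact mem_target.mpr (Or.inr (Or.inr ⟨hxa, (h.pmem.mp hp2).2.2⟩))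
      · exact absurd hyK (hya ▸ haK)
  · -- antisymm
    intro x y h1 h2
    rcases mem_target.mp h1 with ⟨rfl, hx⟩ | hp1 | ⟨hxa, hyK⟩
    · rfl
    · rcases mem_target.mp h2 with ⟨rfl, hy⟩ | hp2 | ⟨hya, hxK⟩
      · rfl
      · exact h.antisymm _ _ ((h.pmem.mp hp1).1) ((h.pmem.mp hp2).1)
      · exact absurd ((h.pmem.mp hp1).2.2) (hya ▸ haK)
    · rcases mem_target.mp h2 with ⟨rfl, hy⟩ | hp2 | ⟨hya, hxK⟩
      · rfl
      · exact absurd ((h.pmem.mp hp2).2.2) (hxa ▸ haK)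
      · exact absurd hyK (hya ▸ haK)
  · -- res
    ext r
    obtain ⟨x, y⟩ := r
    rw [restrictRel, Finset.mem_filter]
    constructor
    · rintro ⟨hr, hxK, hyK⟩
      rcases mem_target.mp hr with ⟨rfl, hx⟩ | hp | ⟨hxa, _⟩
      · exact h.pmem.mpr ⟨h.refl x (Finset.mem_union_right _ hxK), hxK, hyK⟩
      · exact hp
      · exact absurd hxK (hxa ▸ haK)
    · intro hp
      exact ⟨mem_target.mpr (Or.inr (Or.inl hp)), (h.pmem.mp hp).2.1, (h.pmem.mp hp).2.2⟩
  · -- min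
    ext x
    rw [minset, Finset.mem_filter]
    constructor
    · rintro ⟨hxS, hmin⟩
      rcases Finset.mem_union.mp hxS with hxM | hxK
      · exact hxM
      · have := hmin a (mem_target.mpr (Or.inr (Or.inr ⟨rfl, hxK⟩)))
        exact absurd (this ▸ hxK) haK
    · intro hxM
      refine ⟨Finset.mem_union_left _ hxM, fun y hyx => ?_⟩
      rcases mem_target.mp hyx with ⟨rfl, _⟩ | hp | ⟨hya, hxK⟩
      · rfl
      · exact absurd ((h.pmem.mp hp).2.2) (hMnK x hxM)
      · exact absurd hxK (hMnK x hxM)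

lemma dnum_POIso {S : Finset α} {q r : Finset (α × α)}
    (hqS : q ⊆ S ×ˢ S) (hrS : r ⊆ S ×ˢ S)
    (hiso : POIso S q S r) : dnum S q = dnum S r := by
  classical
  obtain ⟨f, hbij, hiff⟩ := hiso
  rw [dnum, dnum]
  apply Finset.card_bij (fun D _ => D.image f)
  · intro D hD
    rw [mem_downsets] at hD ⊢
    obtain ⟨hsub, hdown⟩ := hD
    constructor
    · intro y hy
      obtain ⟨d, hd, rfl⟩ := Finset.mem_image.mp hy
      exact Finset.mem_coe.mp (hbij.mapsTo (Finset.mem_coe.mpr (hsub hd)))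
    · intro y hy x hxr
      obtain ⟨d, hd, rfl⟩ := Finset.mem_image.mp hy
      have hxS : x ∈ S := (Finset.mem_product.mp (hrS hxr)).1
      obtain ⟨x', hx'S, hfx'⟩ := hbij.surjOn (Finset.mem_coe.mpr hxS)
      have hx'S' : x' ∈ S := Finset.mem_coe.mp hx'S
      have hdS : d ∈ S := hsub hd
      have hq : (x', d) ∈ q := (hiff x' hx'S' d hdS).mpr (hfx' ▸ hxr)
      exact Finset.mem_image.mpr ⟨x', hdown d hd x' hq, hfx'⟩
  · intro D1 h1 D2 h2 heq
    rw [mem_downsets] at h1 h2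
    ext x
    constructor
    · intro hx
      have hfx : f x ∈ D2.image f := heq ▸ Finset.mem_image_of_mem f hx
      obtain ⟨x2, hx2, hfx2⟩ := Finset.mem_image.mp hfx
      have := hbij.injOn (Finset.mem_coe.mpr (h2.1 hx2)) (Finset.mem_coe.mpr (h1.1 hx)) hfx2
      exact this ▸ hx2
    · intro hx
      have hfx : f x ∈ D1.image f := heq ▸ Finset.mem_image_of_mem f hx
      obtain ⟨x1, hx1, hfx1⟩ := Finset.mem_image.mp hfx
      have := hbij.injOn (Finset.mem_coe.mpr (h1.1 hx1)) (Finset.mem_coe.mpr (h2.1 hx)) hfx1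
      exact this ▸ hx1
  · intro E hE
    rw [mem_downsets] at hE
    refine ⟨S.filter (fun x => f x ∈ E), ?_, ?_⟩
    · rw [mem_downsets]
      refine ⟨Finset.filter_subset _ _, ?_⟩
      intro y hy x hxy
      rw [Finset.mem_filter] at hy ⊢
      have hxS : x ∈ S := (Finset.mem_product.mp (hqS hxy)).1
      have hr : (f x, f y) ∈ r := (hiff x hxS y hy.1).mp hxy
      exact ⟨hxS, hE.2 (f y) hy.2 (f x) hr⟩
    · ext e
      simp only [Finset.mem_image, Finset.mem_filter]
      constructor
      · rintro ⟨x, ⟨hxS, hfxE⟩, rfl⟩; exact hfxE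
      · intro he
        obtain ⟨x', hx'S, hfx'⟩ := hbij.surjOn (Finset.mem_coe.mpr (hE.1 he))
        exact ⟨x', ⟨Finset.mem_coe.mp hx'S, by rw [hfx']; exact he⟩, hfx'⟩

lemma target_dcl {M K : Finset α} {p : Finset (α × α)} {a : α} (haM : a ∈ M)
    (hMK : Disjoint M K) (hpK : p ⊆ K ×ˢ K) {D : Finset α} (hDK : D ⊆ K)
    (hne : D.Nonempty) :
    M \ dcl (((M ∪ K).image fun z => (z, z)) ∪ p ∪ (({a} : Finset α) ×ˢ K)) D
      = M.erase a := by
  ext x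
  simp only [Finset.mem_sdiff, Finset.mem_erase, mem_dcl]
  constructor
  · rintro ⟨hxM, hnd⟩
    refine ⟨fun hxa => hnd ?_, hxM⟩
    obtain ⟨k, hk⟩ := hne
    exact ⟨k, hk, mem_target.mpr (Or.inr (Or.inr ⟨hxa, hDK hk⟩))⟩
  · rintro ⟨hxa, hxM⟩
    refine ⟨hxM, ?_⟩
    rintro ⟨d, hd, hxd⟩
    rcases mem_target.mp hxd with ⟨rfl, _⟩ | hp | ⟨hxa', _⟩
    · exact (Finset.disjoint_left.mp hMK hxM) (hDK hd)
    · exact (Finset.disjoint_left.mp hMK hxM) (Finset.mem_product.mp (hpK hp)).1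
    · exact hxa hxa'


/-- Theorem 6.7: for `Q ∈ E(M,P)` with `#M = m ≥ 1`,
`d(Q) = Σ_{D downset of P} 2^{#(M ∖ QD)} ≤ 2^{m−1}(d(P)+1)`, with equality in the
bound exactly when `Q` is isomorphic to `A_{m−1} + (A_1 ⊕ P)`. -/
theorem stmt_19 (M K : Finset α) (hMK : Disjoint M K) (hm : 1 ≤ M.card)
    (p q : Finset (α × α)) (hp : IsPOon K p) (hq : q ∈ extPOs M K p) :
    (dnum (M ∪ K) q = ∑ D ∈ downsets K p, 2 ^ (M \ dcl q D).card) ∧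
    (dnum (M ∪ K) q ≤ 2 ^ (M.card - 1) * (dnum K p + 1)) ∧
    (dnum (M ∪ K) q = 2 ^ (M.card - 1) * (dnum K p + 1) ↔
      ∃ a ∈ M, POIso (M ∪ K) q (M ∪ K)
        (((M ∪ K).image fun x => (x, x)) ∪ p ∪ (({a} : Finset α) ×ˢ K))) := by
  classical
  rw [extPOs, Finset.mem_filter] at hq
  obtain ⟨hpow, ⟨hsub, hrefl, htrans, hanti⟩, hres, hmin⟩ := hq
  have h : ExtHyp M K p q := ⟨hMK, hsub, hrefl, htrans, hanti, hres, hmin⟩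
  refine ⟨h.count, h.bound hm, ?_, ?_⟩
  · intro heq
    obtain ⟨a, haM, hqa⟩ := h.structure_of_uniform hm ((h.eq_iff' hm).mp heq)
    exact ⟨a, haM, fun x => x, Set.bijOn_id _, fun x _ y _ => by rw [hqa]⟩
  · rintro ⟨a, haM, hiso⟩
    have hrE : ExtHyp M K p (((M ∪ K).image fun z => (z, z)) ∪ p ∪ (({a} : Finset α) ×ˢ K)) :=
      h.target haM
    have hdq := dnum_POIso h.sub hrE.sub hiso
    rw [hdq]
    apply (hrE.eq_iff' hm).mpr
    intro D hD
    rcases Finset.mem_erase.mp hD with ⟨hne, hDd⟩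
    rw [target_dcl haM hMK h.pK (mem_downsets.mp hDd).1 (Finset.nonempty_iff_ne_empty.mpr hne)]
    exact Finset.card_erase_of_mem haM
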